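/- The Henyey–Greenstein phase function is normalized: for every anisotropy factor η ∈ (−1, 1) and every s ∈ S², ∫_{S²} (1/(4π)) · (1 − η²) · (1 + η² − 2η ⟨s, s'⟩)^{−3/2} dσ(s') = 1, where ⟨s, s'⟩ is the Euclidean inner product in ℝ³. -/

import Mathlib

open MeasureTheory Metric Real
open scoped ENNReal RealInnerProductSpace

noncomputable section

/-- The ambient Euclidean space `ℝ³`. -/
abbrev E3 := EuclideanSpace ℝ (Fin 3)

/-- The unit sphere `S² ⊆ ℝ³`. -/
abbrev S2 := Metric.sphere (0 : E3) 1

/-- The surface measure on the unit sphere `S²`. -/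
def sphereMeasure : Measure S2 := (volume : Measure E3).toSphere


section HGAux
open Set

def hgW : ℝ → ℝ := Set.indicator (Set.Ioo (0:ℝ) 1) 1

lemma w_meas : Measurable hgW := measurable_const.indicator measurableSet_Ioo

instance : IsFiniteMeasure sphereMeasure := by
  constructor
  rw [sphereMeasure, Measure.toSphere_apply_univ]
  exact ENNReal.mul_lt_top (by simp) measure_ball_lt_top

lemma claimA (f : ℝ → ℝ) (hf : Measurable f) (s : E3) :
    ∫ x : E3, f (‖x‖⁻¹ * ⟪s, x⟫) * hgW ‖x‖ =
      (∫ s' : S2, f ⟪s, (s':E3)⟫ ∂sphereMeasure) * (1/3) := by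
  have h0 : hgW (0:ℝ) = 0 := by simp [hgW]
  calc
    ∫ x : E3, f (‖x‖⁻¹ * ⟪s, x⟫) * hgW ‖x‖
        = ∫ x : ({0}ᶜ : Set E3), f (‖x.1‖⁻¹ * ⟪s, x.1⟫) * hgW ‖x.1‖
            ∂((volume : Measure E3).comap (↑)) := by
      rw [integral_subtype_comap (MeasurableSet.singleton (0:E3)).compl
        (fun x => f (‖x‖⁻¹ * ⟪s, x⟫) * hgW ‖x‖), MeasureTheory.restrict_compl_singleton]
    _ = ∫ p : S2 × Ioi (0:ℝ), f ⟪s, (p.1 : E3)⟫ * hgW p.2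
            ∂(volume : Measure E3).toSphere.prod (.volumeIoiPow 2) := by
      have := (volume : Measure E3).measurePreserving_homeomorphUnitSphereProd
      have h3 : Module.finrank ℝ E3 - 1 = 2 := by simp
      rw [h3] at this
      rw [← this.integral_comp (Homeomorph.measurableEmbedding _)
        (fun p : S2 × Ioi (0:ℝ) => f ⟪s, (p.1 : E3)⟫ * hgW p.2)]
      refine integral_congr_ae (Filter.Eventually.of_forall fun x => ?_)
      simp only [homeomorphUnitSphereProd_apply_fst_coe, homeomorphUnitSphereProd_apply_snd_coe]
      rw [real_inner_smul_right]
    _ = (∫ s' : S2, f ⟪s, (s':E3)⟫ ∂sphereMeasure) * ∫ r : Ioi (0:ℝ), hgW r ∂(.volumeIoiPow 2) := by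
      exact integral_prod_mul (fun s' : S2 => f ⟪s, (s':E3)⟫) (fun r : Ioi (0:ℝ) => hgW r)
    _ = (∫ s' : S2, f ⟪s, (s':E3)⟫ ∂sphereMeasure) * (1/3) := by
      congr 1
      simp only [Measure.volumeIoiPow, ENNReal.ofReal]
      rw [integral_withDensity_eq_integral_smul (by fun_prop)]
      rw [integral_subtype_comap measurableSet_Ioi (fun r : ℝ => Real.toNNReal (r^2) • hgW r)]
      have : ∀ r ∈ Ioi (0:ℝ), Real.toNNReal (r ^ 2) • hgW r = Set.indicator (Set.Ioo (0:ℝ) 1) (fun r => r^2) r := by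
        intro r hr
        rcases em (r ∈ Set.Ioo (0:ℝ) 1) with h | h
        · rw [Set.indicator_of_mem h]
          simp [hgW, Set.indicator_of_mem h, NNReal.smul_def,
            Real.coe_toNNReal _ (sq_nonneg r)]
        · rw [Set.indicator_of_notMem h]
          simp [hgW, Set.indicator_of_notMem h]
      rw [setIntegral_congr_fun measurableSet_Ioi this, integral_indicator measurableSet_Ioo,
        Measure.restrict_restrict measurableSet_Ioo, Set.Ioo_inter_Ioi, sup_idem, ← integral_Ioc_eq_integral_Ioo,
        ← intervalIntegral.integral_of_le (by norm_num : (0:ℝ) ≤ 1)]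
      rw [integral_pow]
      norm_num

def hgH (f : ℝ → ℝ) (p : ℝ × ℝ × ℝ) : ℝ :=
  f ((Real.sqrt (p.1^2 + (p.2.1^2 + p.2.2^2)))⁻¹ * p.1) *
    hgW (Real.sqrt (p.1^2 + (p.2.1^2 + p.2.2^2)))

lemma normsq (y : E3) : ‖y‖ = Real.sqrt ((y 0)^2 + ((y 1)^2 + (y 2)^2)) := by
  rw [EuclideanSpace.norm_eq]
  congr 1
  rw [Fin.sum_univ_three]
  simp [Real.norm_eq_abs, sq_abs]
  ring

lemma claimB1 (f : ℝ → ℝ) (s : S2) :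
    ∫ x : E3, f (‖x‖⁻¹ * ⟪(s:E3), x⟫) * hgW ‖x‖ = ∫ p : ℝ × ℝ × ℝ, hgH f p := by
  set e₀ : E3 := EuclideanSpace.single 0 1 with he₀
  have hn : ‖e₀‖ = ‖(s:E3)‖ := by
    rw [EuclideanSpace.norm_single]
    simp [mem_sphere_zero_iff_norm.mp s.2]
  set T : E3 ≃ₗᵢ[ℝ] E3 := Submodule.reflection (ℝ ∙ (e₀ - (s:E3)))ᗮ with hT
  have hTe : T e₀ = (s:E3) := Submodule.reflection_sub hn
  have step1 : ∫ x : E3, f (‖x‖⁻¹ * ⟪(s:E3), x⟫) * hgW ‖x‖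
      = ∫ y : E3, f (‖y‖⁻¹ * (y 0)) * hgW ‖y‖ := by
    rw [← T.measurePreserving.integral_comp T.toHomeomorph.measurableEmbedding
      (fun x => f (‖x‖⁻¹ * ⟪(s:E3), x⟫) * hgW ‖x‖)]
    refine integral_congr_ae (Filter.Eventually.of_forall fun y => ?_)
    have : ⟪(s:E3), T y⟫ = y 0 := by
      rw [← hTe, T.inner_map_map]
      simp [he₀, EuclideanSpace.inner_single_left]
    simp only [T.norm_map, this]
  rw [step1]
  have step2 : ∫ y : E3, f (‖y‖⁻¹ * (y 0)) * hgW ‖y‖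
      = ∫ v : Fin 3 → ℝ, f ((Real.sqrt ((v 0)^2 + ((v 1)^2 + (v 2)^2)))⁻¹ * v 0)
          * hgW (Real.sqrt ((v 0)^2 + ((v 1)^2 + (v 2)^2))) := by
    rw [← ((EuclideanSpace.volume_preserving_symm_measurableEquiv_toLp (Fin 3)).symm _).integral_comp
      (MeasurableEquiv.measurableEmbedding _) (fun y => f (‖y‖⁻¹ * (y 0)) * hgW ‖y‖)]
    refine integral_congr_ae (Filter.Eventually.of_forall fun v => ?_)
    have hcoord : ∀ i, (MeasurableEquiv.toLp 2 (Fin 3 → ℝ)).symm.symm v i = v i := fun _ => rfl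
    beta_reduce
    rw [normsq]
    simp only [hcoord]
  rw [step2]
  have step3 : ∫ v : Fin 3 → ℝ, f ((Real.sqrt ((v 0)^2 + ((v 1)^2 + (v 2)^2)))⁻¹ * v 0)
          * hgW (Real.sqrt ((v 0)^2 + ((v 1)^2 + (v 2)^2)))
      = ∫ q : ℝ × (Fin 2 → ℝ), f ((Real.sqrt (q.1^2 + ((q.2 0)^2 + (q.2 1)^2)))⁻¹ * q.1)
          * hgW (Real.sqrt (q.1^2 + ((q.2 0)^2 + (q.2 1)^2))) := by
    rw [← ((volume_preserving_piFinSuccAbove (fun _ : Fin 3 => ℝ) 0).symm _).integral_comp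
      (MeasurableEquiv.measurableEmbedding _)]
    refine integral_congr_ae (Filter.Eventually.of_forall fun q => ?_)
    have h0 : (MeasurableEquiv.piFinSuccAbove (fun _ : Fin 3 => ℝ) 0).symm q 0 = q.1 := by
      first | (simp [MeasurableEquiv.piFinSuccAbove]; try rfl) | rfl
    have h1 : (MeasurableEquiv.piFinSuccAbove (fun _ : Fin 3 => ℝ) 0).symm q 1 = q.2 0 := by
      first | (simp [MeasurableEquiv.piFinSuccAbove]; try rfl) | rfl
    have h2 : (MeasurableEquiv.piFinSuccAbove (fun _ : Fin 3 => ℝ) 0).symm q 2 = q.2 1 := by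
      first | (simp [MeasurableEquiv.piFinSuccAbove]; try rfl) | rfl
    beta_reduce
    rw [h0, h1, h2]
  rw [step3]
  have hp : MeasurePreserving
      (MeasurableEquiv.prodCongr (MeasurableEquiv.refl ℝ) MeasurableEquiv.finTwoArrow)
      (volume : Measure (ℝ × (Fin 2 → ℝ))) (volume : Measure (ℝ × ℝ × ℝ)) :=
    (MeasurePreserving.id volume).prod (volume_preserving_finTwoArrow ℝ)
  rw [← hp.integral_comp (MeasurableEquiv.measurableEmbedding _) (hgH f)]
  refine integral_congr_ae (Filter.Eventually.of_forall fun p => ?_)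
  beta_reduce
  simp [hgH, MeasurableEquiv.finTwoArrow, MeasurableEquiv.prodCongr]

lemma w_nonneg (r : ℝ) : 0 ≤ hgW r := Set.indicator_nonneg (fun _ _ => zero_le_one) r
lemma w_le_one (r : ℝ) : hgW r ≤ 1 := Set.indicator_le_self' (fun _ _ => zero_le_one) r
lemma w_eq_zero {r : ℝ} (h : 1 ≤ r) : hgW r = 0 :=
  Set.indicator_of_notMem (fun hm => absurd hm.2 (not_lt.mpr h)) _

lemma aux_abs (t a : ℝ) (ha : 0 ≤ a) : |(Real.sqrt (t^2 + a))⁻¹ * t| ≤ 1 := by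
  rcases eq_or_lt_of_le (Real.sqrt_nonneg (t^2 + a)) with h | h
  · rw [← h]; simp
  · rw [abs_mul, abs_inv, abs_of_nonneg (Real.sqrt_nonneg _)]
    rw [inv_mul_le_iff₀ h, mul_one, ← Real.sqrt_sq_eq_abs]
    exact Real.sqrt_le_sqrt (by linarith)

lemma H_meas (f : ℝ → ℝ) (hf : Continuous f) : Measurable (hgH f) := by
  have h1 : Measurable fun p : ℝ × ℝ × ℝ => Real.sqrt (p.1^2 + (p.2.1^2 + p.2.2^2)) := by
    fun_prop
  exact ((hf.measurable.comp (h1.inv.mul measurable_fst))).mul ((measurable_const.indicator measurableSet_Ioo : Measurable hgW).comp h1)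

lemma H_integrable (f : ℝ → ℝ) (hf : Continuous f) : Integrable (hgH f) := by
  obtain ⟨C, hC⟩ := isCompact_Icc.exists_bound_of_continuousOn
    (hf.continuousOn : ContinuousOn f (Set.Icc (-1:ℝ) 1))
  set S : Set (ℝ × ℝ × ℝ) := {p | p.1^2 + (p.2.1^2 + p.2.2^2) ≤ 1} with hS
  have hSm : MeasurableSet S := by
    apply measurableSet_le <;> fun_prop
  have hSsub : S ⊆ Metric.closedBall 0 1 := by
    intro p hp
    simp only [hS, Set.mem_setOf_eq] at hp
    rw [Metric.mem_closedBall, dist_zero_right, Prod.norm_def, Prod.norm_def]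
    have h1 : p.1^2 ≤ 1 := by nlinarith [sq_nonneg p.2.1, sq_nonneg p.2.2]
    have h2 : p.2.1^2 ≤ 1 := by nlinarith [sq_nonneg p.1, sq_nonneg p.2.2]
    have h3 : p.2.2^2 ≤ 1 := by nlinarith [sq_nonneg p.1, sq_nonneg p.2.1]
    rw [← abs_one, ← sq_abs] at h1 h2 h3
    simp only [Real.norm_eq_abs, abs_one] at *
    refine max_le ?_ (max_le ?_ ?_) <;> nlinarith [abs_nonneg p.1, abs_nonneg p.2.1, abs_nonneg p.2.2]
  refine Integrable.mono' (g := S.indicator fun _ => C) ?_ ((H_meas f hf).aestronglyMeasurable) ?_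
  · rw [integrable_indicator_iff hSm]
    exact (integrableOn_const_iff).mpr (Or.inr ((measure_mono hSsub).trans_lt (measure_closedBall_lt_top)))
  · refine Filter.Eventually.of_forall fun p => ?_
    by_cases hp : p ∈ S
    · rw [Set.indicator_of_mem hp]
      have hu : |(Real.sqrt (p.1^2 + (p.2.1^2 + p.2.2^2)))⁻¹ * p.1| ≤ 1 :=
        aux_abs _ _ (by positivity)
      have hfu := hC _ (Set.mem_Icc.mpr (abs_le.mp hu))
      rw [hgH, Real.norm_eq_abs, abs_mul]
      calc |f _| * |hgW _| ≤ C * 1 := by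
            refine mul_le_mul hfu ?_ (abs_nonneg _) (le_trans (norm_nonneg _) hfu)
            rw [abs_of_nonneg (w_nonneg _)]; exact w_le_one _
        _ = C := mul_one C
    · rw [Set.indicator_of_notMem hp]
      have : hgW (Real.sqrt (p.1^2 + (p.2.1^2 + p.2.2^2))) = 0 := by
        apply w_eq_zero
        rw [show (1:ℝ) = Real.sqrt 1 by simp]
        apply Real.sqrt_le_sqrt
        simp only [hS, Set.mem_setOf_eq, not_le] at hp
        linarith
      simp [hgH, this]

def hgM (f : ℝ → ℝ) (q : ℝ × ℝ) : ℝ :=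
  |q.2| * (f ((Real.sqrt (q.1^2 + q.2^2))⁻¹ * q.1) * hgW (Real.sqrt (q.1^2 + q.2^2)))

lemma M_meas (f : ℝ → ℝ) (hf : Continuous f) : Measurable (hgM f) := by
  have h1 : Measurable fun q : ℝ × ℝ => Real.sqrt (q.1^2 + q.2^2) := by fun_prop
  exact (measurable_snd.abs).mul
    (((hf.measurable.comp (h1.inv.mul measurable_fst))).mul
      ((measurable_const.indicator measurableSet_Ioo : Measurable hgW).comp h1))

lemma M_integrable (f : ℝ → ℝ) (hf : Continuous f) : Integrable (hgM f) := by
  obtain ⟨C, hC⟩ := isCompact_Icc.exists_bound_of_continuousOn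
    (hf.continuousOn : ContinuousOn f (Set.Icc (-1:ℝ) 1))
  set S : Set (ℝ × ℝ) := {q | q.1^2 + q.2^2 ≤ 1} with hS
  have hSm : MeasurableSet S := by apply measurableSet_le <;> fun_prop
  have hSsub : S ⊆ Metric.closedBall 0 1 := by
    intro p hp
    simp only [hS, Set.mem_setOf_eq] at hp
    rw [Metric.mem_closedBall, dist_zero_right, Prod.norm_def]
    have h1 : p.1^2 ≤ 1 := by nlinarith [sq_nonneg p.2]
    have h2 : p.2^2 ≤ 1 := by nlinarith [sq_nonneg p.1]
    rw [← abs_one, ← sq_abs] at h1 h2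
    simp only [Real.norm_eq_abs, abs_one] at *
    refine max_le ?_ ?_ <;> nlinarith [abs_nonneg p.1, abs_nonneg p.2]
  refine Integrable.mono' (g := S.indicator fun _ => C) ?_ ((M_meas f hf).aestronglyMeasurable) ?_
  · rw [integrable_indicator_iff hSm]
    exact (integrableOn_const_iff).mpr (Or.inr ((measure_mono hSsub).trans_lt (measure_closedBall_lt_top)))
  · refine Filter.Eventually.of_forall fun p => ?_
    by_cases hp : p ∈ S
    · rw [Set.indicator_of_mem hp]
      have hu : |(Real.sqrt (p.1^2 + p.2^2))⁻¹ * p.1| ≤ 1 := by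
        have := aux_abs p.1 (p.2^2) (sq_nonneg _)
        simpa using this
      have hfu := hC _ (Set.mem_Icc.mpr (abs_le.mp hu))
      have hC0 : 0 ≤ C := le_trans (norm_nonneg _) hfu
      have hp2 : |p.2| ≤ 1 := by
        simp only [hS, Set.mem_setOf_eq] at hp
        rw [← Real.sqrt_one, ← Real.sqrt_sq_eq_abs]
        exact Real.sqrt_le_sqrt (by nlinarith [sq_nonneg p.1])
      rw [hgM, Real.norm_eq_abs, abs_mul, abs_mul, abs_abs]
      have hw : |hgW (Real.sqrt (p.1^2 + p.2^2))| ≤ 1 := by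
        rw [abs_of_nonneg (w_nonneg _)]; exact w_le_one _
      calc |p.2| * (|f _| * |hgW _|) ≤ 1 * (C * 1) := by
            refine mul_le_mul hp2 (mul_le_mul hfu hw (abs_nonneg _) hC0) (by positivity) one_pos.le
        _ = C := by ring
    · rw [Set.indicator_of_notMem hp]
      have : hgW (Real.sqrt (p.1^2 + p.2^2)) = 0 := by
        apply w_eq_zero
        rw [show (1:ℝ) = Real.sqrt 1 by simp]
        apply Real.sqrt_le_sqrt
        simp only [hS, Set.mem_setOf_eq, not_le] at hp
        linarith
      simp [hgM, this]

lemma int_rho_sq_w : ∫ ρ in Set.Ioi (0:ℝ), ρ^2 * hgW ρ = 1/3 := by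
  have : ∀ ρ ∈ Set.Ioi (0:ℝ), ρ^2 * hgW ρ = Set.indicator (Set.Ioo (0:ℝ) 1) (fun r => r^2) ρ := by
    intro r _
    rcases em (r ∈ Set.Ioo (0:ℝ) 1) with h | h
    · rw [Set.indicator_of_mem h]; simp [hgW, Set.indicator_of_mem h]
    · rw [Set.indicator_of_notMem h]; simp [hgW, Set.indicator_of_notMem h]
  rw [setIntegral_congr_fun measurableSet_Ioi this, integral_indicator measurableSet_Ioo,
    Measure.restrict_restrict measurableSet_Ioo, Set.Ioo_inter_Ioi, sup_idem,
    ← integral_Ioc_eq_integral_Ioo, ← intervalIntegral.integral_of_le (by norm_num : (0:ℝ) ≤ 1),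
    integral_pow]
  norm_num

lemma inner_polar (f : ℝ → ℝ) (t : ℝ) :
    ∫ q : ℝ × ℝ, hgH f (t, q)
      = (∫ ρ in Set.Ioi (0:ℝ), ρ * (f ((Real.sqrt (t^2 + ρ^2))⁻¹ * t)
          * hgW (Real.sqrt (t^2 + ρ^2)))) * (2 * π) := by
  rw [← integral_comp_polarCoord_symm (fun q : ℝ × ℝ => hgH f (t, q))]
  have key : ∀ p : ℝ × ℝ, p.1 • hgH f (t, polarCoord.symm p)
      = (fun ρ => ρ * (f ((Real.sqrt (t^2 + ρ^2))⁻¹ * t) * hgW (Real.sqrt (t^2 + ρ^2)))) p.1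
          * (fun _ : ℝ => (1:ℝ)) p.2 := by
    intro p
    have hsq : (p.1 * Real.cos p.2)^2 + (p.1 * Real.sin p.2)^2 = p.1^2 := by
      have := Real.sin_sq_add_cos_sq p.2
      ring_nf
      nlinarith [Real.sin_sq_add_cos_sq p.2]
    show p.1 * hgH f (t, (p.1 * Real.cos p.2, p.1 * Real.sin p.2)) = _
    rw [hgH]
    simp only []
    rw [hsq]
    ring
  simp_rw [key]
  have htarget : polarCoord.target = Set.Ioi (0:ℝ) ×ˢ Set.Ioo (-π) π := rfl
  rw [htarget, Measure.volume_eq_prod, ← Measure.prod_restrict,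
    integral_prod_mul (fun ρ => ρ * (f ((Real.sqrt (t^2 + ρ^2))⁻¹ * t)
      * hgW (Real.sqrt (t^2 + ρ^2)))) (fun _ : ℝ => (1:ℝ))]
  congr 1
  rw [setIntegral_const, Real.volume_real_Ioo_of_le (by linarith [Real.pi_pos] : -π ≤ π), smul_eq_mul, mul_one]
  ring

lemma half_M (f : ℝ → ℝ) (t : ℝ) :
    ∫ ρ in Set.Ioi (0:ℝ), ρ * (f ((Real.sqrt (t^2 + ρ^2))⁻¹ * t) * hgW (Real.sqrt (t^2 + ρ^2)))
      = (1/2) * ∫ r : ℝ, hgM f (t, r) := by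
  have h : (∫ r : ℝ, hgM f (t, r)) = 2 * ∫ ρ in Set.Ioi (0:ℝ),
      ρ * (f ((Real.sqrt (t^2 + ρ^2))⁻¹ * t) * hgW (Real.sqrt (t^2 + ρ^2))) := by
    rw [← integral_comp_abs (f := fun ρ => ρ * (f ((Real.sqrt (t^2 + ρ^2))⁻¹ * t)
      * hgW (Real.sqrt (t^2 + ρ^2))))]
    refine integral_congr_ae (Filter.Eventually.of_forall fun r => ?_)
    simp only [hgM, sq_abs]
  rw [h]; ring

lemma M_polar (f : ℝ → ℝ) :
    ∫ q : ℝ × ℝ, hgM f q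
      = (1/3) * ∫ θ in Set.Ioo (-π) π, |Real.sin θ| * f (Real.cos θ) := by
  rw [← integral_comp_polarCoord_symm (hgM f)]
  have htarget : polarCoord.target = Set.Ioi (0:ℝ) ×ˢ Set.Ioo (-π) π := rfl
  have key : ∀ p ∈ Set.Ioi (0:ℝ) ×ˢ Set.Ioo (-π) π, p.1 • hgM f (polarCoord.symm p) =
      (fun ρ => ρ^2 * hgW ρ) p.1 * (fun θ => |Real.sin θ| * f (Real.cos θ)) p.2 := by
    rintro ⟨ρ, θ⟩ ⟨hρ, _⟩
    have hρ' : (0:ℝ) < ρ := hρ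
    have hsq : (ρ * Real.cos θ)^2 + (ρ * Real.sin θ)^2 = ρ^2 := by
      nlinarith [Real.sin_sq_add_cos_sq θ]
    show ρ * hgM f (ρ * Real.cos θ, ρ * Real.sin θ) = _
    rw [hgM]
    simp only []
    rw [hsq, Real.sqrt_sq hρ'.le, abs_mul, abs_of_pos hρ', inv_mul_cancel_left₀ hρ'.ne']
    ring
  rw [htarget, setIntegral_congr_fun (measurableSet_Ioi.prod measurableSet_Ioo) key,
    Measure.volume_eq_prod, ← Measure.prod_restrict,
    integral_prod_mul (fun ρ => ρ^2 * hgW ρ) (fun θ => |Real.sin θ| * f (Real.cos θ)),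
    int_rho_sq_w]

lemma claimB2 (f : ℝ → ℝ) (hf : Continuous f) :
    ∫ p : ℝ × ℝ × ℝ, hgH f p
      = (π/3) * ∫ θ in Set.Ioo (-π) π, |Real.sin θ| * f (Real.cos θ) := by
  rw [Measure.volume_eq_prod, integral_prod _ (by
    rw [← Measure.volume_eq_prod]; exact H_integrable f hf)]
  have inner : ∀ t : ℝ, (∫ q : ℝ × ℝ, hgH f (t, q))
      = (2 * π) * ((1/2) * ∫ r : ℝ, hgM f (t, r)) := by
    intro t
    rw [inner_polar f t, half_M f t]; ring
  simp_rw [inner]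
  rw [integral_const_mul, integral_const_mul]
  have fub : (∫ t : ℝ, ∫ r : ℝ, hgM f (t, r)) = ∫ q : ℝ × ℝ, hgM f q := by
    rw [Measure.volume_eq_prod, integral_prod _ (by
      rw [← Measure.volume_eq_prod]; exact M_integrable f hf)]
  rw [fub, M_polar f]
  ring

lemma theta_eq (f : ℝ → ℝ) (hf : Continuous f) :
    ∫ θ in Set.Ioo (-π) π, |Real.sin θ| * f (Real.cos θ)
      = 2 * ∫ t in (-1:ℝ)..1, f t := by
  have hg : Continuous fun θ => |Real.sin θ| * f (Real.cos θ) := by fun_prop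
  have hpi : -π ≤ π := by linarith [Real.pi_pos]
  rw [← integral_Ioc_eq_integral_Ioo,
    ← intervalIntegral.integral_of_le hpi]
  have hsplit : (∫ θ in (-π)..π, |Real.sin θ| * f (Real.cos θ))
      = (∫ θ in (-π)..(0:ℝ), |Real.sin θ| * f (Real.cos θ))
        + ∫ θ in (0:ℝ)..π, |Real.sin θ| * f (Real.cos θ) :=
    (intervalIntegral.integral_add_adjacent_intervals
      (hg.intervalIntegrable _ _) (hg.intervalIntegrable _ _)).symm
  have hneg : (∫ θ in (-π)..(0:ℝ), |Real.sin θ| * f (Real.cos θ))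
      = ∫ θ in (0:ℝ)..π, |Real.sin θ| * f (Real.cos θ) := by
    have h := intervalIntegral.integral_comp_neg (a := (0:ℝ)) (b := π)
      (f := fun θ => |Real.sin θ| * f (Real.cos θ))
    simp only [Real.sin_neg, Real.cos_neg, abs_neg, neg_zero] at h
    exact h.symm
  have hsin : (∫ θ in (0:ℝ)..π, |Real.sin θ| * f (Real.cos θ))
      = ∫ θ in (0:ℝ)..π, f (Real.cos θ) * Real.sin θ := by
    refine intervalIntegral.integral_congr fun θ hθ => ?_
    rw [Set.uIcc_of_le Real.pi_pos.le] at hθ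
    rw [abs_of_nonneg (Real.sin_nonneg_of_nonneg_of_le_pi hθ.1 hθ.2)]
    ring
  have hsubst : (∫ θ in (0:ℝ)..π, f (Real.cos θ) * Real.sin θ)
      = ∫ t in (-1:ℝ)..1, f t := by
    have h := intervalIntegral.integral_comp_mul_deriv
      (f := Real.cos) (f' := fun θ => -Real.sin θ) (g := f) (a := (0:ℝ)) (b := π)
      (fun x _ => Real.hasDerivAt_cos x) (by fun_prop) hf
    rw [Real.cos_zero, Real.cos_pi] at h
    have h2 : (∫ θ in (0:ℝ)..π, (f ∘ Real.cos) θ * (-Real.sin θ))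
        = - ∫ θ in (0:ℝ)..π, f (Real.cos θ) * Real.sin θ := by
      have e : ∀ θ, (f ∘ Real.cos) θ * (-Real.sin θ) = -(f (Real.cos θ) * Real.sin θ) :=
        fun θ => by simp [Function.comp]; try ring
      simp_rw [e, intervalIntegral.integral_neg]
    rw [h2] at h
    rw [← neg_neg (∫ θ in (0:ℝ)..π, f (Real.cos θ) * Real.sin θ), h,
      intervalIntegral.integral_symm, neg_neg]
  rw [hsplit, hneg, hsin, hsubst]; ring

lemma base_pos {η t : ℝ} (hη : η ∈ Set.Ioo (-1:ℝ) 1) (ht : |t| ≤ 1) :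
    0 < 1 + η^2 - 2*η*t := by
  have h1 : η * t ≤ |η| := by
    calc η * t ≤ |η * t| := le_abs_self _
      _ = |η| * |t| := abs_mul _ _
      _ ≤ |η| * 1 := by nlinarith [abs_nonneg η]
      _ = |η| := mul_one _
  have h2 : |η| < 1 := abs_lt.mpr ⟨hη.1, hη.2⟩
  have h3 : (0:ℝ) < (1 - |η|)^2 := pow_pos (by linarith) 2
  nlinarith [sq_abs η]

lemma int_one_dim (η : ℝ) (hη : η ∈ Set.Ioo (-1:ℝ) 1) :
    ∫ t in (-1:ℝ)..1, (1 + η^2 - 2*η*t) ^ (-(3:ℝ)/2) = 2 / (1 - η^2) := by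
  by_cases h0 : η = 0
  · subst h0
    simp [Real.one_rpow]
    norm_num
  · have hpos : ∀ t ∈ Set.uIcc (-1:ℝ) 1, 0 < 1 + η^2 - 2*η*t := by
      intro t ht
      rw [Set.uIcc_of_le (by norm_num : (-1:ℝ) ≤ 1)] at ht
      exact base_pos hη (abs_le.mpr ⟨ht.1, ht.2⟩)
    have hderiv : ∀ t ∈ Set.uIcc (-1:ℝ) 1,
        HasDerivAt (fun t => (1/η) * (1 + η^2 - 2*η*t) ^ (-(1:ℝ)/2))
          ((1 + η^2 - 2*η*t) ^ (-(3:ℝ)/2)) t := by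
      intro t ht
      have hu : HasDerivAt (fun t : ℝ => 1 + η^2 - 2*η*t) (-(2*η)) t := by
        simpa using ((hasDerivAt_id t).const_mul (2*η)).const_sub (1 + η^2)
      have hr := (hu.rpow_const (p := -(1:ℝ)/2) (Or.inl (hpos t ht).ne')).const_mul (1/η)
      convert hr using 1
      case e'_4 => rfl
      case e'_5 => rfl
      rw [show -(1:ℝ)/2 - 1 = -(3:ℝ)/2 by norm_num]
      try field_simp
      try ring
    have hint : IntervalIntegrable (fun t => (1 + η^2 - 2*η*t) ^ (-(3:ℝ)/2))
        volume (-1) 1 := by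
      apply ContinuousOn.intervalIntegrable
      exact (by fun_prop : ContinuousOn (fun t : ℝ => 1 + η^2 - 2*η*t) _).rpow_const
        (fun t ht => Or.inl (hpos t ht).ne')
    rw [intervalIntegral.integral_eq_sub_of_hasDerivAt hderiv hint]
    have e1 : 1 + η^2 - 2*η*1 = (1-η)^2 := by ring
    have e2 : 1 + η^2 - 2*η*(-1) = (1+η)^2 := by ring
    have hm : (0:ℝ) < 1 - η := by linarith [hη.2]
    have hp : (0:ℝ) < 1 + η := by linarith [hη.1]
    have r1 : ((1-η)^2 : ℝ) ^ (-(1:ℝ)/2) = (1-η)⁻¹ := by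
      rw [← Real.rpow_natCast (1-η) 2, ← Real.rpow_mul hm.le]
      norm_num [Real.rpow_neg_one]
    have r2 : ((1+η)^2 : ℝ) ^ (-(1:ℝ)/2) = (1+η)⁻¹ := by
      rw [← Real.rpow_natCast (1+η) 2, ← Real.rpow_mul hp.le]
      norm_num [Real.rpow_neg_one]
    rw [e1, e2, r1, r2]
    have hη2 : 1 - η^2 ≠ 0 := by nlinarith [sq_nonneg η, hη.1, hη.2]
    field_simp
    ring

lemma sphere_integral_eq (f : ℝ → ℝ) (hf : Continuous f) (s : S2) :
    ∫ s' : S2, f ⟪(s:E3), (s':E3)⟫ ∂sphereMeasure = 2 * π * ∫ t in (-1:ℝ)..1, f t := by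
  have h := claimA f hf.measurable (s:E3)
  rw [claimB1 f s, claimB2 f hf, theta_eq f hf] at h
  linarith


end HGAux

/-- The Henyey–Greenstein scattering phase function with anisotropy factor `η`. -/
def henyeyGreenstein (η : ℝ) (s s' : S2) : ℝ :=
  (1 / (4 * π)) * (1 - η ^ 2) *
    (1 + η ^ 2 - 2 * η * ⟪(s : E3), (s' : E3)⟫) ^ (-(3 : ℝ) / 2)

/-- the Henyey–Greenstein phase function is normalized:
`∫_{S²} Φ(s,s') dσ(s') = 1` for every `η ∈ (−1,1)` and every `s ∈ S²`. -/
theorem henyeyGreenstein_normalized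
    (η : ℝ) (hη : η ∈ Set.Ioo (-1 : ℝ) 1) (s : S2) :
    (∫ s', henyeyGreenstein η s s' ∂sphereMeasure) = 1 := by
  obtain ⟨h1, h2⟩ := hη
  set c : ℝ := (1/(4*π)) * (1 - η^2) with hc
  set fc : ℝ → ℝ := fun t => c * (1 + η^2 - 2*η*(max (-1) (min 1 t))) ^ (-(3:ℝ)/2) with hfc
  have hclamp : ∀ t : ℝ, |max (-1:ℝ) (min 1 t)| ≤ 1 := by
    intro t; rw [abs_le]
    exact ⟨le_max_left _ _, max_le (by norm_num) (min_le_left _ _)⟩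
  have hbase : ∀ t, (0:ℝ) < 1 + η^2 - 2*η*(max (-1) (min 1 t)) :=
    fun t => base_pos ⟨h1,h2⟩ (hclamp t)
  have hfc_cont : Continuous fc := by
    refine continuous_const.mul (Continuous.rpow_const ?_ fun t => Or.inl (hbase t).ne')
    fun_prop
  have hpt : ∀ s' : S2, henyeyGreenstein η s s' = fc ⟪(s:E3),(s':E3)⟫ := by
    intro s'
    have hs : ‖(s:E3)‖ = 1 := mem_sphere_zero_iff_norm.mp s.2
    have hs' : ‖((s':E3))‖ = 1 := mem_sphere_zero_iff_norm.mp s'.2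
    have hinner : |⟪(s:E3),(s':E3)⟫| ≤ 1 := by
      calc |⟪(s:E3),(s':E3)⟫| ≤ ‖(s:E3)‖ * ‖(s':E3)‖ := abs_real_inner_le_norm _ _
        _ = 1 := by rw [hs, hs']; norm_num
    obtain ⟨ha, hb⟩ := abs_le.mp hinner
    have hm : max (-1:ℝ) (min 1 ⟪(s:E3),(s':E3)⟫) = ⟪(s:E3),(s':E3)⟫ := by
      rw [min_eq_right hb, max_eq_right ha]
    rw [henyeyGreenstein, hfc]
    simp only [hm, hc]
    try ring_nf
  rw [integral_congr_ae (Filter.Eventually.of_forall hpt), sphere_integral_eq fc hfc_cont s]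
  have hcongr : ∫ t in (-1:ℝ)..1, fc t
      = ∫ t in (-1:ℝ)..1, c * (1+η^2-2*η*t)^(-(3:ℝ)/2) := by
    refine intervalIntegral.integral_congr fun t ht => ?_
    rw [Set.uIcc_of_le (by norm_num : (-1:ℝ) ≤ 1)] at ht
    rw [hfc]
    simp only [min_eq_right ht.2, max_eq_right ht.1]
  rw [hcongr, intervalIntegral.integral_const_mul, int_one_dim η ⟨h1,h2⟩]
  have hne : (1 - η^2) ≠ 0 := by nlinarith
  rw [hc]
  field_simp
  ring
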